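/- Let X and Y be normed spaces with X finite-dimensional, H ⊆ X open, Φ : H → L(X,Y) continuous, and f : H → Y Lipschitz such that Df(x) = Φ(x) for Lebesgue almost every x ∈ H. Then f is continuously differentiable on H and Df(x) = Φ(x) for every x ∈ H. -/

import Mathlib

open Metric MeasureTheory

private lemma isometry_hasFDerivAt_iff {X Y Z : Type*} [NormedAddCommGroup X] [NormedSpace ℝ X]
    [NormedAddCommGroup Y] [NormedSpace ℝ Y] [NormedAddCommGroup Z] [NormedSpace ℝ Z]
    (J : Y →ₗᵢ[ℝ] Z) {f : X → Y} {φ : X →L[ℝ] Y} {x : X} :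
    HasFDerivAt (fun v => J (f v)) (J.toContinuousLinearMap.comp φ) x ↔ HasFDerivAt f φ x := by
  rw [hasFDerivAt_iff_isLittleO_nhds_zero, hasFDerivAt_iff_isLittleO_nhds_zero,
    ← Asymptotics.isLittleO_norm_left,
    ← Asymptotics.isLittleO_norm_left (f' := fun h => f (x + h) - f x - φ h)]
  have : (fun h : X => ‖J (f (x + h)) - J (f x) - (J.toContinuousLinearMap.comp φ) h‖)
      = fun h : X => ‖f (x + h) - f x - φ h‖ := by
    funext h
    rw [show J (f (x + h)) - J (f x) - (J.toContinuousLinearMap.comp φ) h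
        = J (f (x + h) - f x - φ h) by simp [map_sub], J.norm_map]
  rw [this]

/-- The local average of `g` over a ball of radius `δ` around `x`. -/
private noncomputable def mollify {X E : Type*} [NormedAddCommGroup X] [MeasurableSpace X]
    [NormedAddCommGroup E] [NormedSpace ℝ E]
    (μ : Measure X) (g : X → E) (δ : ℝ) (x : X) : E :=
  (μ (closedBall (0 : X) δ)).toReal⁻¹ • ∫ y in closedBall (0 : X) δ, g (x + y) ∂μ

private lemma mollify_sub_le {X E : Type*} [NormedAddCommGroup X] [NormedSpace ℝ X]
    [FiniteDimensional ℝ X] [MeasurableSpace X] [BorelSpace X]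
    [NormedAddCommGroup E] [NormedSpace ℝ E] [CompleteSpace E]
    (μ : Measure X) [μ.IsAddHaarMeasure] {g : X → E} {δ : ℝ} (hδ : 0 < δ) {x : X} {C : ℝ}
    (hmeas : AEStronglyMeasurable (fun y => g (x + y)) (μ.restrict (closedBall (0 : X) δ)))
    (hbound : ∀ y ∈ closedBall (0 : X) δ, ‖g (x + y) - g x‖ ≤ C) :
    ‖mollify μ g δ x - g x‖ ≤ C := by
  set cb := closedBall (0 : X) δ with hcb
  have hfin : μ cb < ⊤ := (isCompact_closedBall _ _).measure_lt_top
  have hpos : 0 < (μ cb).toReal :=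
    ENNReal.toReal_pos (measure_closedBall_pos μ 0 hδ).ne' hfin.ne
  set c : ℝ := ((μ cb).toReal)⁻¹ with hc
  have hc0 : 0 ≤ c := inv_nonneg.2 hpos.le
  have hintsub : IntegrableOn (fun y => g (x + y) - g x) cb μ := by
    refine Integrable.mono' (g := fun _ => C) (integrableOn_const hfin.ne)
      (hmeas.sub aestronglyMeasurable_const) ?_
    exact (ae_restrict_iff' measurableSet_closedBall).2 (Filter.Eventually.of_forall hbound)
  have hintc : IntegrableOn (fun _ => g x) cb μ := integrableOn_const hfin.ne
  have hint : IntegrableOn (fun y => g (x + y)) cb μ := by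
    have h2 := hintsub.add hintc
    have : ((fun y => g (x + y) - g x) + fun _ => g x) = fun y => g (x + y) := by
      funext y; simp
    rwa [this] at h2
  have key : mollify μ g δ x - g x = c • ∫ y in cb, (g (x + y) - g x) ∂μ := by
    rw [integral_sub hint hintc, setIntegral_const, smul_sub, smul_smul,
      show c * μ.real cb = 1 from inv_mul_cancel₀ hpos.ne', one_smul]
    rfl
  rw [key, norm_smul, Real.norm_eq_abs, abs_of_nonneg hc0]
  have hb := norm_setIntegral_le_of_norm_le_const (μ := μ) (s := cb) hfin hbound
  calc c * ‖∫ y in cb, (g (x + y) - g x) ∂μ‖ ≤ c * (C * (μ cb).toReal) := by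
        exact mul_le_mul_of_nonneg_left hb hc0
    _ = C * (c * (μ cb).toReal) := by ring
    _ = C := by rw [hc, inv_mul_cancel₀ hpos.ne', mul_one]

set_option synthInstance.maxHeartbeats 1000000 in
private lemma mollify_hasFDerivAt {X Y : Type*} [NormedAddCommGroup X] [NormedSpace ℝ X]
    [FiniteDimensional ℝ X] [MeasurableSpace X] [BorelSpace X]
    [NormedAddCommGroup Y] [NormedSpace ℝ Y] [CompleteSpace Y]
    (μ : Measure X) [μ.IsAddHaarMeasure]
    {H : Set X} {Φ : X → (X →L[ℝ] Y)} (hΦ : ContinuousOn Φ H)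
    {f : X → Y} {K : NNReal} (hf : LipschitzOnWith K f H)
    (hae : ∀ᵐ x ∂μ, x ∈ H → HasFDerivAt f (Φ x) x)
    {x₀ : X} {r : ℝ} (hrH : closedBall x₀ r ⊆ H)
    {δ : ℝ} (hδ0 : 0 < δ) (hδr : δ ≤ r / 4)
    {x : X} (hx : x ∈ closedBall x₀ (r / 4)) :
    HasFDerivAt (mollify μ f δ) (mollify μ Φ δ x) x := by
  set cb := closedBall (0 : X) δ with hcbdef
  have hcb_meas : MeasurableSet cb := measurableSet_closedBall
  have hcb_cpt : IsCompact cb := isCompact_closedBall _ _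
  have hfin : μ cb < ⊤ := hcb_cpt.measure_lt_top
  -- geometry
  have memH : ∀ {z y : X}, dist z x₀ ≤ 3 * (r / 4) → y ∈ cb → z + y ∈ H := by
    intro z y hz hy
    apply hrH
    rw [mem_closedBall, dist_eq_norm, show z + y - x₀ = (z - x₀) + y by abel]
    calc ‖(z - x₀) + y‖ ≤ ‖z - x₀‖ + ‖y‖ := norm_add_le _ _
      _ ≤ 3 * (r / 4) + r / 4 := by
          refine add_le_add ?_ (le_trans (mem_closedBall_zero_iff.1 hy) hδr)
          rwa [dist_eq_norm] at hz
      _ = r := by ring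
  have hr0 : 0 < r := lt_of_lt_of_le hδ0 (le_trans hδr (by linarith))
  have hx3 : dist x x₀ ≤ 3 * (r / 4) := le_trans (mem_closedBall.1 hx) (by linarith)
  have hball3 : ∀ {z : X}, z ∈ ball x (r / 4) → dist z x₀ ≤ 3 * (r / 4) := by
    intro z hz
    calc dist z x₀ ≤ dist z x + dist x x₀ := dist_triangle _ _ _
      _ ≤ r / 4 + (r / 4 + r / 4) := by
          refine add_le_add (le_of_lt (mem_ball.1 hz)) ?_
          calc dist x x₀ ≤ r / 4 := mem_closedBall.1 hx
            _ ≤ r / 4 + r / 4 := by linarith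
      _ = 3 * (r / 4) := by ring
  have hcont : ∀ {z : X}, dist z x₀ ≤ 3 * (r / 4) →
      ContinuousOn (fun y => f (z + y)) cb := by
    intro z hz
    exact hf.continuousOn.comp (continuous_const.add continuous_id).continuousOn
      fun y hy => memH hz hy
  have hr4 : (0:ℝ) < r / 4 := by linarith
  have main := hasFDerivAt_integral_of_dominated_loc_of_lip
    (μ := μ.restrict cb) (x₀ := x)
    (F := fun x' y => f (x' + y)) (F' := fun y => Φ (x + y))
    (bound := fun _ => (K : ℝ)) (ball_mem_nhds x hr4)
    ?_ ?_ ?_ ?_ ?_ ?_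
  · have h2 := main.2.const_smul ((μ cb).toReal⁻¹)
    exact h2
  · -- hF_meas
    refine Filter.eventually_of_mem (ball_mem_nhds x hr4) fun x' hx' => ?_
    exact (hcont (hball3 hx')).aestronglyMeasurable hcb_meas
  · -- hF_int
    exact (hcont hx3).integrableOn_compact hcb_cpt
  · -- hF'_meas
    exact ((hΦ.comp (continuous_const.add continuous_id).continuousOn
      fun y hy => memH hx3 hy).aestronglyMeasurable hcb_meas)
  · -- h_lip
    refine Filter.eventually_of_mem (self_mem_ae_restrict hcb_meas) fun y hy => ?_
    have : LipschitzOnWith K (fun x' => f (x' + y)) (ball x (r / 4)) := by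
      intro a ha b hb
      have haH : a + y ∈ H := memH (hball3 ha) hy
      have hbH : b + y ∈ H := memH (hball3 hb) hy
      calc edist (f (a + y)) (f (b + y)) ≤ K * edist (a + y) (b + y) := hf haH hbH
        _ = K * edist a b := by rw [edist_add_right]
    convert this using 2
    simp
  · -- bound integrable
    exact integrableOn_const hfin.ne
  · -- h_diff
    have h1 : ∀ᵐ y ∂μ, (x + y ∈ H → HasFDerivAt f (Φ (x + y)) (x + y)) :=
      (measurePreserving_add_left μ x).quasiMeasurePreserving.ae hae
    filter_upwards [ae_restrict_of_ae h1, ae_restrict_mem hcb_meas] with y hy hycb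
    have hmem : x + y ∈ H := memH hx3 hycb
    have hd := (hy hmem).comp x ((hasFDerivAt_id x).add_const y)
    exact hd

set_option synthInstance.maxHeartbeats 1000000 in
private theorem stmt9_aux {X Y : Type*} [NormedAddCommGroup X] [NormedSpace ℝ X]
    [FiniteDimensional ℝ X] [MeasurableSpace X] [BorelSpace X]
    [NormedAddCommGroup Y] [NormedSpace ℝ Y] [CompleteSpace Y]
    (μ : Measure X) [μ.IsAddHaarMeasure]
    (H : Set X) (hH : IsOpen H)
    (Φ : X → (X →L[ℝ] Y)) (hΦ : ContinuousOn Φ H)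
    (f : X → Y) (K : NNReal) (hf : LipschitzOnWith K f H)
    (hae : ∀ᵐ x ∂μ, x ∈ H → HasFDerivAt f (Φ x) x)
    {x₀ : X} (hx₀ : x₀ ∈ H) : HasFDerivAt f (Φ x₀) x₀ := by
  obtain ⟨r, hr0, hrH⟩ : ∃ r > 0, closedBall x₀ r ⊆ H :=
    (Metric.nhds_basis_closedBall.mem_iff).1 (hH.mem_nhds hx₀)
  set q : ℝ := r / 4 with hq
  have hq0 : 0 < q := by positivity
  set δn : ℕ → ℝ := fun n => q / (n + 1) with hδn
  have hδpos : ∀ n, 0 < δn n := fun n => by positivity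
  have hδle : ∀ n, δn n ≤ q := fun n => by
    rw [hδn]
    refine div_le_self hq0.le ?_
    have : (1:ℝ) ≤ (n:ℝ) + 1 := by
      have : (0:ℝ) ≤ (n:ℝ) := Nat.cast_nonneg n
      linarith
    exact this
  have hδ0 : Filter.Tendsto δn Filter.atTop (nhds 0) := by
    have h1 : Filter.Tendsto (fun n : ℕ => 1 / ((n:ℝ) + 1)) Filter.atTop (nhds 0) :=
      tendsto_one_div_add_atTop_nhds_zero_nat
    have h2 := h1.const_mul q
    simpa [hδn, div_eq_mul_inv, one_mul] using h2
  -- geometry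
  have mem2 : ∀ {z y : X}, dist z x₀ ≤ q → ‖y‖ ≤ q → z + y ∈ closedBall x₀ (2 * q) := by
    intro z y hz hy
    rw [mem_closedBall, dist_eq_norm, show z + y - x₀ = (z - x₀) + y by abel]
    calc ‖(z - x₀) + y‖ ≤ ‖z - x₀‖ + ‖y‖ := norm_add_le _ _
      _ ≤ q + q := add_le_add (by rwa [dist_eq_norm] at hz) hy
      _ = 2 * q := by ring
  have hsubH : closedBall x₀ (2 * q) ⊆ H := fun z hz =>
    hrH (closedBall_subset_closedBall (by rw [hq]; linarith) hz)
  have hballH : ball x₀ q ⊆ H := fun z hz =>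
    hrH (mem_closedBall.2 (le_trans (le_of_lt (mem_ball.1 hz)) (by rw [hq]; linarith)))
  refine hasFDerivAt_of_tendstoUniformlyOn (l := Filter.atTop) isOpen_ball
    (f' := fun n x => mollify μ Φ (δn n) x) (f := fun n => mollify μ f (δn n)) (g' := Φ)
    ?_ ?_ ?_ (mem_ball_self hq0)
  · -- uniform convergence of derivatives
    rw [Metric.tendstoUniformlyOn_iff]
    intro ε hε
    have hcpt : IsCompact (closedBall x₀ (2 * q)) := isCompact_closedBall _ _
    have huc : UniformContinuousOn Φ (closedBall x₀ (2 * q)) :=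
      hcpt.uniformContinuousOn_of_continuous (hΦ.mono hsubH)
    obtain ⟨d, hd0, hd⟩ := Metric.uniformContinuousOn_iff.1 huc (ε / 2) (half_pos hε)
    filter_upwards [hδ0.eventually_lt_const hd0] with n hn
    intro x hx
    have hxq : dist x x₀ ≤ q := le_of_lt (mem_ball.1 hx)
    rw [dist_eq_norm, norm_sub_rev]
    refine lt_of_le_of_lt (mollify_sub_le μ (hδpos n) ?_ ?_) (half_lt_self hε)
    · exact ((hΦ.comp (continuous_const.add continuous_id).continuousOn
        fun y hy => hsubH (mem2 hxq (le_trans (mem_closedBall_zero_iff.1 hy) (hδle n)))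
        ).aestronglyMeasurable measurableSet_closedBall)
    · intro y hy
      have h1 : x + y ∈ closedBall x₀ (2 * q) :=
        mem2 hxq (le_trans (mem_closedBall_zero_iff.1 hy) (hδle n))
      have h2 : x ∈ closedBall x₀ (2 * q) :=
        mem_closedBall.2 (le_trans hxq (by linarith))
      have h3 : dist (x + y) x < d := by
        rw [dist_eq_norm, add_sub_cancel_left]
        exact lt_of_le_of_lt (mem_closedBall_zero_iff.1 hy) hn
      have h4 := hd _ h1 _ h2 h3
      rw [dist_eq_norm] at h4
      exact h4.le
  · -- derivatives of the mollifications
    intro n x hx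
    exact mollify_hasFDerivAt μ hΦ hf hae hrH (hδpos n) (by rw [← hq]; exact hδle n)
      (ball_subset_closedBall hx)
  · -- pointwise convergence
    intro x hx
    have hxH : x ∈ H := hballH hx
    have hxq : dist x x₀ ≤ q := le_of_lt (mem_ball.1 hx)
    rw [tendsto_iff_norm_sub_tendsto_zero]
    refine squeeze_zero (g := fun n => (K : ℝ) * δn n) (fun n => norm_nonneg _) (fun n => ?_) ?_
    · refine mollify_sub_le (C := (K : ℝ) * δn n) μ (hδpos n) ?_ ?_
      · exact ((hf.continuousOn.comp (continuous_const.add continuous_id).continuousOn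
          fun y hy => hsubH (mem2 hxq (le_trans (mem_closedBall_zero_iff.1 hy) (hδle n)))
          ).aestronglyMeasurable measurableSet_closedBall)
      · intro y hy
        have hyH : x + y ∈ H :=
          hsubH (mem2 hxq (le_trans (mem_closedBall_zero_iff.1 hy) (hδle n)))
        have hdist := hf.dist_le_mul _ hyH _ hxH
        rw [dist_eq_norm] at hdist
        refine le_trans hdist ?_
        have : dist (x + y) x = ‖y‖ := by rw [dist_eq_norm, add_sub_cancel_left]
        rw [this]
        exact mul_le_mul_of_nonneg_left (mem_closedBall_zero_iff.1 hy) K.coe_nonneg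
    · simpa using hδ0.const_mul (K : ℝ)

/-- A Lipschitz map whose Fréchet derivative equals a continuous operator-valued map `Φ`
almost everywhere on an open set `H` is `C¹` on `H` with derivative `Φ` everywhere on `H`. -/
theorem stmt9 {X Y : Type*} [NormedAddCommGroup X] [NormedSpace ℝ X]
    [FiniteDimensional ℝ X] [MeasurableSpace X] [BorelSpace X]
    [NormedAddCommGroup Y] [NormedSpace ℝ Y]
    (μ : Measure X) [μ.IsAddHaarMeasure]
    (H : Set X) (hH : IsOpen H)
    (Φ : X → (X →L[ℝ] Y)) (hΦ : ContinuousOn Φ H)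
    (f : X → Y) (K : NNReal) (hf : LipschitzOnWith K f H)
    (hae : ∀ᵐ x ∂μ, x ∈ H → HasFDerivAt f (Φ x) x) :
    ∀ x ∈ H, HasFDerivAt f (Φ x) x := by
  intro x hx
  let J : Y →ₗᵢ[ℝ] UniformSpace.Completion Y := UniformSpace.Completion.toComplₗᵢ
  refine (isometry_hasFDerivAt_iff J).1 ?_
  refine stmt9_aux μ H hH (fun z => J.toContinuousLinearMap.comp (Φ z)) ?_ (fun v => J (f v)) K
    ?_ ?_ hx
  · exact ((ContinuousLinearMap.compL ℝ X Y _ J.toContinuousLinearMap).continuous).comp_continuousOn hΦ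
  · have h := J.lipschitz.comp_lipschitzOnWith hf
    rw [one_mul] at h
    exact h
  · exact hae.mono fun z hz hzH => (isometry_hasFDerivAt_iff J).2 (hz hzH)
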